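/- Let q = e^{-2π/√3}. Define a(q) = Σ_{k,l∈ℤ} q^{k²+kl+l²}, b(q) = Σ_{k,l∈ℤ} q^{k²+kl+l²}·ζ₃^{k-l} with ζ₃ = e^{2πi/3}, and c(q) = Σ_{k,l∈ℤ} q^{(k+1/3)²+(k+1/3)(l+1/3)+(l+1/3)²}. Then b(e^{-2π/√3}) = c(e^{-2π/√3}). -/

import Mathlib

open Real

open Complex in
/-- 1D Gaussian summability with a shift. -/
lemma sum1 {c : ℝ} (hc : 0 < c) (x : ℝ) :
    Summable fun n : ℤ => rexp (-c * ((n : ℝ) + x) ^ 2) := by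
  have hτ : (0 : ℝ) < ((c / π : ℝ) * I : ℂ).im := by
    simp [div_pos hc pi_pos]
  have h1 : Summable fun n : ℤ => jacobiTheta₂_term n ((c * x / π : ℝ) * I) ((c / π : ℝ) * I) :=
    (summable_jacobiTheta₂_term_iff _ _).mpr (by simpa using hτ)
  have h2 : ∀ n : ℤ, jacobiTheta₂_term n ((c * x / π : ℝ) * I) ((c / π : ℝ) * I)
      = ((rexp (-c * n ^ 2 - 2 * c * x * n) : ℝ) : ℂ) := by
    intro n
    rw [jacobiTheta₂_term, Complex.ofReal_exp]
    congr 1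
    have hπ : (π : ℂ) ≠ 0 := Complex.ofReal_ne_zero.mpr pi_ne_zero
    push_cast
    field_simp
    linear_combination (2 * c * x * n + c * n ^ 2) * Complex.I_sq
  rw [funext h2] at h1
  have h3 : Summable fun n : ℤ => rexp (-c * n ^ 2 - 2 * c * x * n) :=
    Complex.summable_ofReal.mp h1
  have h4 := h3.mul_left (rexp (-c * x ^ 2))
  refine h4.congr fun n => ?_
  rw [← Real.exp_add]
  congr 1
  ring

/-- 2D Gaussian summability with shifts. -/
lemma sum2 {c : ℝ} (hc : 0 < c) (x y : ℝ) :
    Summable fun p : ℤ × ℤ =>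
      rexp (-c * (((p.1 : ℝ) + x) ^ 2 + ((p.2 : ℝ) + y) ^ 2)) := by
  have := (sum1 hc x).mul_of_nonneg (sum1 hc y)
    (fun n => (Real.exp_pos _).le) (fun n => (Real.exp_pos _).le)
  refine this.congr fun p => ?_
  rw [← Real.exp_add]
  congr 1
  ring

open Complex in
lemma sumC {c : ℝ} (hc : 0 < c) (x y : ℝ) {f : ℤ × ℤ → ℂ}
    (h : ∀ p : ℤ × ℤ, ‖f p‖ ≤ rexp (-c * (((p.1 : ℝ) + x) ^ 2 + ((p.2 : ℝ) + y) ^ 2))) :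
    Summable f :=
  Summable.of_norm_bounded (sum2 hc x y) h

open Complex in
/-- Poisson summation for shifted Gaussians, in real coordinates. -/
lemma quad {a : ℝ} (ha : 0 < a) (u v : ℝ) :
    (∑' k : ℤ, cexp ((-π * a * k ^ 2 + 2 * π * u * k : ℝ) + (2 * π * v * k : ℝ) * I)) =
      1 / (a : ℂ) ^ (1 / 2 : ℂ) *
        ∑' n : ℤ, cexp ((-π / a * (((n : ℝ) - v) ^ 2 - u ^ 2) : ℝ) +
          (-2 * π * u * ((n : ℝ) - v) / a : ℝ) * I) := by
  have key := Complex.tsum_exp_neg_quadratic (a := (a : ℂ))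
    (by simpa using ha) ((u : ℂ) + (v : ℂ) * I)
  have h1 : ∀ k : ℤ, cexp (-(π : ℂ) * a * k ^ 2 + 2 * π * ((u : ℂ) + v * I) * k)
      = cexp ((-π * a * k ^ 2 + 2 * π * u * k : ℝ) + (2 * π * v * k : ℝ) * I) := by
    intro k; congr 1; push_cast; ring
  have h2 : ∀ n : ℤ, cexp (-(π : ℂ) / a * (n + I * ((u : ℂ) + v * I)) ^ 2)
      = cexp ((-π / a * (((n : ℝ) - v) ^ 2 - u ^ 2) : ℝ) +
          (-2 * π * u * ((n : ℝ) - v) / a : ℝ) * I) := by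
    intro n; congr 1
    push_cast
    linear_combination (-(π : ℂ) / a) *
      (u ^ 2 + (Complex.I ^ 2 + 1) * v ^ 2 + 2 * v * ((n : ℂ) - v) + 2 * Complex.I * u * v) *
      Complex.I_sq
  rw [← funext h1, ← funext h2, key]

open Complex in
lemma norm_cexp_ofReal (x y : ℝ) : ‖cexp ((x : ℂ) + (y : ℝ) * I)‖ = rexp x := by
  rw [Complex.norm_exp]
  simp

set_option maxHeartbeats 1000000 in
open Complex in
lemma cubic_aux (s : ℝ) (hs0 : 0 < s) (hs3 : s * s = 3) :
    (∑' p : ℤ × ℤ, (Real.exp (-(2 * π / s) *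
        ((p.1 : ℝ) ^ 2 + (p.1 : ℝ) * (p.2 : ℝ) + (p.2 : ℝ) ^ 2)) : ℂ) *
        Complex.exp (2 * π * Complex.I / 3) ^ (p.1 - p.2)) =
      ((∑' p : ℤ × ℤ, Real.exp (-(2 * π / s) *
        (((p.1 : ℝ) + 1 / 3) ^ 2 + ((p.1 : ℝ) + 1 / 3) * ((p.2 : ℝ) + 1 / 3) +
          ((p.2 : ℝ) + 1 / 3) ^ 2))) : ℝ) := by
  set t : ℝ := 2 * π / s with htdef
  have ht0 : 0 < t := by positivity
  have ha0 : (0:ℝ) < 2 / s := by positivity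
  have hc0 : (0:ℝ) < π * s / 2 := by positivity
  set c : ℝ := π * s / 2 with hcdef
  set A : ℂ := 1 / ((2 / s : ℝ) : ℂ) ^ (1 / 2 : ℂ) with hAdef
  set G : ℤ × ℤ → ℂ := fun p =>
    cexp (((-c * (((p.2:ℝ) - 1/3) ^ 2 + (p.1:ℝ) ^ 2) : ℝ) : ℂ) +
      ((π * (p.1:ℝ) * ((p.2:ℝ) - 1) : ℝ) : ℂ) * I) with hGdef
  set H : ℤ × ℤ → ℂ := fun p =>
    cexp (((-c * ((p.2:ℝ) ^ 2 + ((p.1:ℝ) + 1/3) ^ 2) : ℝ) : ℂ) +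
      ((π * (p.2:ℝ) * ((p.1:ℝ) + 1) : ℝ) : ℂ) * I) with hHdef
  -- summability of G and H
  have hGsum : Summable G := by
    refine sumC hc0 0 (-(1/3)) (fun p => ?_)
    simp only [hGdef]
    rw [norm_cexp_ofReal, Real.exp_le_exp]
    exact le_of_eq (by ring)
  have hHsum : Summable H := by
    refine sumC hc0 (1/3) 0 (fun p => ?_)
    simp only [hHdef]
    rw [norm_cexp_ofReal, Real.exp_le_exp]
    exact le_of_eq (by ring)
  -- the left-hand side
  have hL : (∑' p : ℤ × ℤ, (Real.exp (-t *
        ((p.1 : ℝ) ^ 2 + (p.1 : ℝ) * (p.2 : ℝ) + (p.2 : ℝ) ^ 2)) : ℂ) *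
        Complex.exp (2 * π * Complex.I / 3) ^ (p.1 - p.2)) = A * ∑' p, G p := by
    set FL : ℤ × ℤ → ℂ := fun p =>
      cexp (((-t * ((p.1:ℝ) ^ 2 + (p.1:ℝ) * (p.2:ℝ) + (p.2:ℝ) ^ 2) : ℝ) : ℂ) +
        ((2 * π / 3 * ((p.1:ℝ) - (p.2:ℝ)) : ℝ) : ℂ) * I) with hFLdef
    have hFLsum' : Summable fun q : ℤ × ℤ => FL (q.2, q.1) := by
      refine sumC (half_pos ht0) 0 0 (fun p => ?_)
      simp only [hFLdef]
      rw [norm_cexp_ofReal, Real.exp_le_exp]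
      nlinarith [sq_nonneg ((p.1:ℝ) + (p.2:ℝ)), ht0.le]
    calc (∑' p : ℤ × ℤ, (Real.exp (-t *
            ((p.1 : ℝ) ^ 2 + (p.1 : ℝ) * (p.2 : ℝ) + (p.2 : ℝ) ^ 2)) : ℂ) *
            Complex.exp (2 * π * Complex.I / 3) ^ (p.1 - p.2))
        = ∑' p : ℤ × ℤ, FL p := by
          refine tsum_congr fun p => ?_
          rw [hFLdef, ← Complex.exp_int_mul, Complex.ofReal_exp, ← Complex.exp_add]
          congr 1
          push_cast
          ring
      _ = ∑' q : ℤ × ℤ, FL (q.2, q.1) := by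
          exact ((Equiv.prodComm ℤ ℤ).tsum_eq FL).symm
      _ = ∑' (l : ℤ), ∑' (k : ℤ), FL (k, l) := Summable.tsum_prod hFLsum'
      _ = ∑' (l : ℤ), (A * ∑' (n : ℤ), G (l, n)) := by
          refine tsum_congr fun l => ?_
          calc (∑' (k : ℤ), FL (k, l))
              = ∑' (k : ℤ), cexp (((-t * (l:ℝ)^2 : ℝ) : ℂ) + ((-(2*π*(l:ℝ)/3) : ℝ) : ℂ) * I) *
                  cexp (((-π * (2/s) * (k:ℝ) ^ 2 + 2 * π * (-((l:ℝ)/s)) * (k:ℝ) : ℝ) : ℂ) +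
                    ((2 * π * (1/3) * (k:ℝ) : ℝ) : ℂ) * I) := by
                refine tsum_congr fun k => ?_
                simp only [hFLdef]
                rw [← Complex.exp_add]
                congr 1
                simp only [htdef, hcdef]
                push_cast
                have hsC : (s : ℂ) ≠ 0 := by exact_mod_cast hs0.ne'
                field_simp
                ring
            _ = cexp (((-t * (l:ℝ)^2 : ℝ) : ℂ) + ((-(2*π*(l:ℝ)/3) : ℝ) : ℂ) * I) *
                  ∑' (k : ℤ), cexp (((-π * (2/s) * (k:ℝ) ^ 2 + 2 * π * (-((l:ℝ)/s)) * (k:ℝ) : ℝ) : ℂ) +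
                    ((2 * π * (1/3) * (k:ℝ) : ℝ) : ℂ) * I) := tsum_mul_left
            _ = cexp (((-t * (l:ℝ)^2 : ℝ) : ℂ) + ((-(2*π*(l:ℝ)/3) : ℝ) : ℂ) * I) *
                  (A * ∑' (n : ℤ), cexp (((-π / (2/s) * (((n:ℝ) - 1/3) ^ 2 - (-((l:ℝ)/s)) ^ 2) : ℝ) : ℂ) +
                    ((-2 * π * (-((l:ℝ)/s)) * ((n:ℝ) - 1/3) / (2/s) : ℝ) : ℂ) * I)) := by
                rw [quad ha0 (-((l:ℝ)/s)) (1/3)]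
            _ = A * ∑' (n : ℤ), G (l, n) := by
                rw [← mul_assoc, mul_comm _ A, mul_assoc]
                congr 1
                rw [← tsum_mul_left]
                refine tsum_congr fun n => ?_
                simp only [hGdef]
                rw [← Complex.exp_add]
                congr 1
                simp only [htdef, hcdef]
                push_cast
                have hsC : (s : ℂ) ≠ 0 := by exact_mod_cast hs0.ne'
                have hs3C : (s : ℂ) * (s : ℂ) = 3 := by exact_mod_cast hs3
                have hinv : ((s : ℝ) : ℂ)⁻¹ = ((s : ℝ) : ℂ) / 3 := by
                  rw [eq_div_iff (by norm_num : (3 : ℂ) ≠ 0), inv_mul_eq_div, eq_comm,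
                    eq_div_iff hsC]
                  linear_combination hs3C
                simp only [div_eq_mul_inv, mul_inv, inv_inv, hinv]
                linear_combination ((π : ℂ) * (s : ℂ) * (l : ℂ) ^ 2 / 18 + (π : ℂ) * (l : ℂ) * ((n : ℂ) - 1/3) * Complex.I / 3) * hs3C
      _ = A * ∑' (l : ℤ), ∑' (n : ℤ), G (l, n) := tsum_mul_left
      _ = A * ∑' p, G p := by rw [← Summable.tsum_prod hGsum]
  -- the right-hand side
  have hR : (((∑' p : ℤ × ℤ, Real.exp (-t *
        (((p.1 : ℝ) + 1 / 3) ^ 2 + ((p.1 : ℝ) + 1 / 3) * ((p.2 : ℝ) + 1 / 3) +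
          ((p.2 : ℝ) + 1 / 3) ^ 2))) : ℝ) : ℂ) = A * ∑' p, H p := by
    set FR : ℤ × ℤ → ℂ := fun p =>
      cexp ((( -t * (((p.1:ℝ) + 1/3) ^ 2 + ((p.1:ℝ) + 1/3) * ((p.2:ℝ) + 1/3) +
        ((p.2:ℝ) + 1/3) ^ 2) : ℝ) : ℂ)) with hFRdef
    have hFRsum' : Summable fun q : ℤ × ℤ => FR (q.2, q.1) := by
      refine sumC (half_pos ht0) (1/3) (1/3) (fun p => ?_)
      simp only [hFRdef]
      simp only [← Complex.ofReal_exp, Complex.norm_real, Real.norm_eq_abs, Real.abs_exp]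
      rw [Real.exp_le_exp]
      nlinarith [sq_nonneg (((p.2:ℝ) + 1/3) + ((p.1:ℝ) + 1/3)), ht0.le]
    calc (((∑' p : ℤ × ℤ, Real.exp (-t *
            (((p.1 : ℝ) + 1 / 3) ^ 2 + ((p.1 : ℝ) + 1 / 3) * ((p.2 : ℝ) + 1 / 3) +
              ((p.2 : ℝ) + 1 / 3) ^ 2))) : ℝ) : ℂ)
        = ∑' p : ℤ × ℤ, FR p := by
          rw [Complex.ofReal_tsum]
          exact tsum_congr fun p => by simp only [hFRdef]; rw [Complex.ofReal_exp]
      _ = ∑' q : ℤ × ℤ, FR (q.2, q.1) := ((Equiv.prodComm ℤ ℤ).tsum_eq FR).symm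
      _ = ∑' (l : ℤ), ∑' (k : ℤ), FR (k, l) := Summable.tsum_prod hFRsum'
      _ = ∑' (l : ℤ), (A * ∑' (n : ℤ), H (l, n)) := by
          refine tsum_congr fun l => ?_
          calc (∑' (k : ℤ), FR (k, l))
              = ∑' (k : ℤ), cexp (((-t * ((l:ℝ)^2 + (l:ℝ) + 1/3) : ℝ) : ℂ)) *
                  cexp (((-π * (2/s) * (k:ℝ) ^ 2 + 2 * π * (-(((l:ℝ)+1)/s)) * (k:ℝ) : ℝ) : ℂ) +
                    ((2 * π * 0 * (k:ℝ) : ℝ) : ℂ) * I) := by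
                refine tsum_congr fun k => ?_
                simp only [hFRdef]
                rw [← Complex.exp_add]
                congr 1
                simp only [htdef, hcdef]
                push_cast
                have hsC : (s : ℂ) ≠ 0 := by exact_mod_cast hs0.ne'
                field_simp
                ring
            _ = cexp (((-t * ((l:ℝ)^2 + (l:ℝ) + 1/3) : ℝ) : ℂ)) *
                  ∑' (k : ℤ), cexp (((-π * (2/s) * (k:ℝ) ^ 2 + 2 * π * (-(((l:ℝ)+1)/s)) * (k:ℝ) : ℝ) : ℂ) +
                    ((2 * π * 0 * (k:ℝ) : ℝ) : ℂ) * I) := tsum_mul_left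
            _ = cexp (((-t * ((l:ℝ)^2 + (l:ℝ) + 1/3) : ℝ) : ℂ)) *
                  (A * ∑' (n : ℤ), cexp (((-π / (2/s) * (((n:ℝ) - 0) ^ 2 - (-(((l:ℝ)+1)/s)) ^ 2) : ℝ) : ℂ) +
                    ((-2 * π * (-(((l:ℝ)+1)/s)) * ((n:ℝ) - 0) / (2/s) : ℝ) : ℂ) * I)) := by
                rw [quad ha0 (-(((l:ℝ)+1)/s)) 0]
            _ = A * ∑' (n : ℤ), H (l, n) := by
                rw [← mul_assoc, mul_comm _ A, mul_assoc]
                congr 1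
                rw [← tsum_mul_left]
                refine tsum_congr fun n => ?_
                simp only [hHdef]
                rw [← Complex.exp_add]
                congr 1
                simp only [htdef, hcdef]
                push_cast
                have hsC : (s : ℂ) ≠ 0 := by exact_mod_cast hs0.ne'
                have hs3C : (s : ℂ) * (s : ℂ) = 3 := by exact_mod_cast hs3
                have hinv : ((s : ℝ) : ℂ)⁻¹ = ((s : ℝ) : ℂ) / 3 := by
                  rw [eq_div_iff (by norm_num : (3 : ℂ) ≠ 0), inv_mul_eq_div, eq_comm,
                    eq_div_iff hsC]
                  linear_combination hs3C
                simp only [div_eq_mul_inv, mul_inv, inv_inv, hinv]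
                linear_combination ((π : ℂ) * (s : ℂ) * ((l : ℂ) + 1) ^ 2 / 18 + (π : ℂ) * (n : ℂ) * ((l : ℂ) + 1) * Complex.I / 3) * hs3C
      _ = A * ∑' (l : ℤ), ∑' (n : ℤ), H (l, n) := tsum_mul_left
      _ = A * ∑' p, H p := by rw [← Summable.tsum_prod hHsum]
  rw [hL, hR]
  congr 1
  -- ∑ G = ∑ H via the symmetry (l, n) ↦ (-n, -l)
  have he := ((Equiv.prodComm ℤ ℤ).trans (Equiv.neg (ℤ × ℤ))).tsum_eq H
  rw [← he]
  refine tsum_congr fun p => ?_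
  simp only [hGdef, hHdef]
  simp only [Equiv.trans_apply, Equiv.prodComm_apply, Equiv.neg_apply, Prod.fst_neg,
    Prod.snd_neg, Prod.swap_prod_mk, Prod.fst_swap, Prod.snd_swap]
  congr 1
  push_cast
  ring

theorem cubic_theta_b_eq_c :
    (∑' p : ℤ × ℤ, (Real.exp (-(2 * π / Real.sqrt 3) *
        ((p.1 : ℝ) ^ 2 + (p.1 : ℝ) * (p.2 : ℝ) + (p.2 : ℝ) ^ 2)) : ℂ) *
        Complex.exp (2 * π * Complex.I / 3) ^ (p.1 - p.2)) =
      ((∑' p : ℤ × ℤ, Real.exp (-(2 * π / Real.sqrt 3) *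
        (((p.1 : ℝ) + 1 / 3) ^ 2 + ((p.1 : ℝ) + 1 / 3) * ((p.2 : ℝ) + 1 / 3) +
          ((p.2 : ℝ) + 1 / 3) ^ 2))) : ℝ) :=
  cubic_aux (Real.sqrt 3) (by positivity) (Real.mul_self_sqrt (by norm_num))
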